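/- Let n ≥ 4 be an even integer, let C_n be the cycle graph on n vertices with Laplacian L, and fix a gain k > 0. For distinct vertices s₁ ≠ s₂, let T(s₁,s₂) = tr((L + k·E_{s₁,s₁} + k·E_{s₂,s₂})⁻¹) (proportional to the total system error with two noise-corrupted leaders s₁, s₂). Then T(s₁,s₂) is minimized over all pairs of distinct vertices exactly at pairs whose geodesic distance in C_n equals n/2 (antipodal pairs); equivalently, T(s₁,s₂) ≥ T(t₁,t₂) whenever dist(t₁,t₂) = n/2, with equality if and only if dist(s₁,s₂) = n/2. -/

import Mathlib

open Matrix



/- ### elementary sums -/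
private lemma sum_cast (t : ℕ) : ∑ x ∈ Finset.range t, (x : ℝ) = t * (t - 1) / 2 := by
  induction t with
  | zero => simp
  | succ t ih => rw [Finset.sum_range_succ, ih]; push_cast; ring

private lemma sum_sq (t : ℕ) : ∑ x ∈ Finset.range t, (x : ℝ)^2 = t * (t-1) * (2*t-1) / 6 := by
  induction t with
  | zero => simp
  | succ t ih => rw [Finset.sum_range_succ, ih]; push_cast; ring

private lemma sum_sq_lin (t : ℕ) :
    ∑ x ∈ Finset.range t, (2*(x:ℝ) - t)^2 = t * ((t:ℝ)^2 + 2) / 3 := by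
  have h : ∀ x ∈ Finset.range t, (2*(x:ℝ) - t)^2 = 4*(x:ℝ)^2 - (4*t)*(x:ℝ) + (t:ℝ)^2 := by
    intros; ring
  rw [Finset.sum_congr rfl h]
  simp only [Finset.sum_add_distrib, Finset.sum_sub_distrib, ← Finset.mul_sum,
    Finset.sum_const, Finset.card_range, nsmul_eq_mul, sum_cast, sum_sq]
  ring

private lemma sum_H (t : ℕ) :
    ∑ x ∈ Finset.range t, (x:ℝ) * ((t:ℝ) - x) / 2 = t * ((t:ℝ)^2 - 1) / 12 := by
  have h : ∀ x ∈ Finset.range t, (x:ℝ) * ((t:ℝ) - x) / 2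
      = (t:ℝ)/2 * (x:ℝ) - (1/2) * (x:ℝ)^2 := by intros; ring
  rw [Finset.sum_congr rfl h]
  simp only [Finset.sum_sub_distrib, ← Finset.mul_sum, sum_cast, sum_sq]
  ring

/- ### the H function on ZMod n -/
private noncomputable def Hc (n : ℕ) (u : ZMod n) : ℝ := (u.val : ℝ) * ((n:ℝ) - u.val) / 2

private lemma Hc_zero (n : ℕ) [NeZero n] : Hc n 0 = 0 := by simp [Hc]

private lemma Hc_nonneg (n : ℕ) [NeZero n] (u : ZMod n) : 0 ≤ Hc n u := by
  have h := ZMod.val_lt u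
  have h1 : (u.val : ℝ) ≤ (n : ℝ) := by exact_mod_cast h.le
  have h2 : (0:ℝ) ≤ (n:ℝ) - u.val := by linarith
  have h3 : (0:ℝ) ≤ (u.val:ℝ) := Nat.cast_nonneg _
  simp only [Hc]
  nlinarith

private lemma Hc_neg (n : ℕ) [NeZero n] (u : ZMod n) : Hc n (-u) = Hc n u := by
  by_cases h : u = 0
  · simp [h]
  · have hlt := ZMod.val_lt u
    simp only [Hc, ZMod.neg_val, if_neg h]
    rw [Nat.cast_sub hlt.le]
    ring

private lemma Hc_dd (n : ℕ) [NeZero n] (hn : 4 ≤ n) (u : ZMod n) :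
    Hc n (u - 1) + Hc n (u + 1) = 2 * Hc n u - 1 + (n:ℝ) * (if u = 0 then (1:ℝ) else 0) := by
  haveI : Fact (1 < n) := ⟨by omega⟩
  have hone : (1 : ZMod n).val = 1 := ZMod.val_one n
  by_cases h : u = 0
  · subst h
    have h10 : (1 : ZMod n) ≠ 0 := by
      intro hh
      have := congrArg ZMod.val hh
      rw [hone, ZMod.val_zero] at this; omega
    have hneg : ((0:ZMod n) - 1) = -1 := by ring
    have h1n : (1:ℕ) ≤ n := by omega
    have hneg1 : ((-1 : ZMod n)).val = n - 1 := by rw [ZMod.neg_val, if_neg h10, hone]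
    rw [hneg]
    simp only [Hc, zero_sub, zero_add, hneg1, hone, ZMod.val_zero, if_pos rfl]
    push_cast [Nat.cast_sub h1n]
    ring
  · have hv1 : 1 ≤ u.val := Nat.one_le_iff_ne_zero.2 (fun hh => h ((ZMod.val_eq_zero u).1 hh))
    have hvn : u.val < n := ZMod.val_lt u
    have hu : ((u.val : ℕ) : ZMod n) = u := ZMod.natCast_zmod_val u
    have hsub : (u - 1) = (((u.val - 1 : ℕ)) : ZMod n) := by
      rw [sub_eq_iff_eq_add]
      have h1 : (((u.val - 1 : ℕ)) : ZMod n) + 1 = (((u.val - 1) + 1 : ℕ) : ZMod n) := by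
        push_cast; ring
      rw [h1, Nat.sub_add_cancel hv1, hu]
    have hsubval : (u - 1).val = u.val - 1 := by
      rw [hsub, ZMod.val_cast_of_lt (by omega)]
    by_cases h2 : u.val = n - 1
    · have hadd : u + 1 = 0 := by
        have h1 : u + 1 = ((u.val + 1 : ℕ) : ZMod n) := by push_cast [hu]; ring
        rw [h1, h2, Nat.sub_add_cancel (by omega)]
        exact ZMod.natCast_self n
      simp only [Hc, hadd, ZMod.val_zero, hsubval, if_neg h, h2]
      push_cast [Nat.cast_sub (by omega : 1 ≤ n - 1), Nat.cast_sub (by omega : 1 ≤ n)]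
      ring
    · have haddval : (u + 1).val = u.val + 1 := by
        have h1 : u + 1 = ((u.val + 1 : ℕ) : ZMod n) := by push_cast [hu]; ring
        rw [h1, ZMod.val_cast_of_lt (by omega)]
      simp only [Hc, hsubval, haddval, if_neg h]
      push_cast [Nat.cast_sub hv1]
      ring

/- ### sum conversions -/
private lemma zmod_sum (n : ℕ) [NeZero n] (G : ℕ → ℝ) :
    ∑ v : ZMod n, G v.val = ∑ x ∈ Finset.range n, G x :=
  Finset.sum_nbij' (fun v => v.val) (fun x => (x : ZMod n))
    (fun a _ => Finset.mem_range.2 (ZMod.val_lt a))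
    (fun _ _ => Finset.mem_univ _)
    (fun a _ => ZMod.natCast_zmod_val a)
    (fun a ha => ZMod.val_cast_of_lt (Finset.mem_range.1 ha))
    (fun _ _ => rfl)

private lemma sum_Hc (n : ℕ) [NeZero n] :
    ∑ v : ZMod n, Hc n v = (n:ℝ) * ((n:ℝ)^2 - 1) / 12 := by
  have h := zmod_sum n (fun x => (x:ℝ) * ((n:ℝ) - x) / 2)
  simp only [Hc]
  rw [h, sum_H]

private lemma sum_W (n : ℕ) [NeZero n] (δ : ZMod n) (hδ : δ ≠ 0) :
    ∑ v : ZMod n, (Hc n v - Hc n (v - δ))^2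
      = (n:ℝ) * ((δ.val:ℝ)*((n:ℝ)-(δ.val:ℝ))) * ((δ.val:ℝ)*((n:ℝ)-(δ.val:ℝ))+2)/12 := by
  set d := δ.val with hd
  have hd1 : 0 < d := Nat.pos_of_ne_zero (fun hh => hδ ((ZMod.val_eq_zero δ).1 hh))
  have hdn : d < n := ZMod.val_lt δ
  have hmδ : -δ = ((n - d : ℕ) : ZMod n) := by
    have h := ZMod.neg_val δ
    rw [if_neg hδ] at h
    rw [← ZMod.natCast_zmod_val (-δ), h]
  have hval : ∀ v : ZMod n, (v - δ).val = (v.val + (n - d)) % n := by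
    intro v
    rw [sub_eq_add_neg, hmδ, ZMod.val_add, ZMod.val_cast_of_lt (by omega)]
  have hcm : ((n - d : ℕ) : ℝ) = (n:ℝ) - (d:ℝ) := Nat.cast_sub hdn.le
  have step1 : ∑ v : ZMod n, (Hc n v - Hc n (v - δ))^2
      = ∑ x ∈ Finset.range n,
          ((fun x : ℕ => ((x:ℝ) * ((n:ℝ) - x) / 2
            - ((((x + (n-d)) % n : ℕ)):ℝ) * ((n:ℝ) - (((x + (n-d)) % n : ℕ)):ℝ) / 2)^2) x) := by
    rw [← zmod_sum n]
    apply Finset.sum_congr rfl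
    intro v _
    simp only [Hc, hval v]
  rw [step1]
  rw [← Finset.sum_range_add_sum_Ico _ hdn.le]
  have first : ∑ x ∈ Finset.range d,
      ((x:ℝ) * ((n:ℝ) - x) / 2
        - ((((x + (n-d)) % n : ℕ)):ℝ) * ((n:ℝ) - (((x + (n-d)) % n : ℕ)):ℝ) / 2)^2
      = ((n:ℝ)-(d:ℝ))^2/4 * ((d:ℝ) * ((d:ℝ)^2+2)/3) := by
    rw [← sum_sq_lin d, Finset.mul_sum]
    apply Finset.sum_congr rfl
    intro x hx
    have hxd := Finset.mem_range.1 hx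
    have hmod : (x + (n - d)) % n = x + (n - d) := Nat.mod_eq_of_lt (by omega)
    rw [hmod]
    have hc2 : ((x + (n - d) : ℕ) : ℝ) = (x:ℝ) + ((n:ℝ) - d) := by
      push_cast [hcm]; ring
    rw [hc2]
    ring
  have second : ∑ x ∈ Finset.Ico d n,
      ((x:ℝ) * ((n:ℝ) - x) / 2
        - ((((x + (n-d)) % n : ℕ)):ℝ) * ((n:ℝ) - (((x + (n-d)) % n : ℕ)):ℝ) / 2)^2
      = (d:ℝ)^2/4 * (((n-d:ℕ):ℝ) * (((n-d:ℕ):ℝ)^2+2)/3) := by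
    rw [Finset.sum_Ico_eq_sum_range, ← sum_sq_lin (n-d), Finset.mul_sum]
    apply Finset.sum_congr rfl
    intro i hi
    have hin := Finset.mem_range.1 hi
    have hmod : ((d + i) + (n - d)) % n = i := by
      have h1 : (d + i) + (n - d) = n + i := by omega
      rw [h1, Nat.add_mod_left, Nat.mod_eq_of_lt (by omega)]
    rw [hmod]
    have hc2 : ((d + i : ℕ) : ℝ) = (d:ℝ) + i := by push_cast; ring
    rw [hc2, hcm]
    ring
  rw [first, second, hcm]
  ring

/- ### the explicit inverse -/
private noncomputable def al (n : ℕ) (k : ℝ) (s₁ s₂ v : ZMod n) : ℝ :=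
  1/(2*k) + (Hc n (v - s₂) - Hc n (v - s₁)) / (2*((n:ℝ) + k * Hc n (s₂ - s₁)))

private noncomputable def be (n : ℕ) (k : ℝ) (s₁ s₂ v : ZMod n) : ℝ := 1/k - al n k s₁ s₂ v

private noncomputable def Xm (n : ℕ) (k : ℝ) (s₁ s₂ : ZMod n) : Matrix (ZMod n) (ZMod n) ℝ :=
  Matrix.of fun u v =>
    al n k s₁ s₂ v + (Hc n (v - s₁) - k * be n k s₁ s₂ v * Hc n (s₂ - s₁)) / n
      - (Hc n (u - v) - k * al n k s₁ s₂ v * Hc n (u - s₁)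
          - k * be n k s₁ s₂ v * Hc n (u - s₂)) / n

private lemma key_alg (P Q hδ k nn A : ℝ) (hk : k ≠ 0) (hn : nn ≠ 0) (hE : nn + k*hδ ≠ 0)
    (hA : A = 1/(2*k) + (Q - P)/(2*(nn + k*hδ))) :
    A + (P - k*(1/k - A)*hδ)/nn - (Q - k*A*hδ - k*(1/k - A)*0)/nn = 1/k - A := by
  have hE2 : 2*(nn + k*hδ) ≠ 0 := mul_ne_zero two_ne_zero hE
  subst hA
  field_simp
  ring

private lemma Xm_s₁ (n : ℕ) [NeZero n] (k : ℝ) (s₁ s₂ v : ZMod n) :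
    Xm n k s₁ s₂ s₁ v = al n k s₁ s₂ v := by
  simp only [Xm, Matrix.of_apply]
  rw [show s₁ - v = -(v - s₁) by ring, Hc_neg, show s₁ - s₂ = -(s₂ - s₁) by ring, Hc_neg,
    sub_self, Hc_zero]
  ring

private lemma Xm_s₂ (n : ℕ) [NeZero n] (k : ℝ) (hk : k ≠ 0) (hn : (n:ℝ) ≠ 0)
    (s₁ s₂ : ZMod n) (hE : (n:ℝ) + k * Hc n (s₂ - s₁) ≠ 0) (v : ZMod n) :
    Xm n k s₁ s₂ s₂ v = be n k s₁ s₂ v := by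
  simp only [Xm, Matrix.of_apply, be]
  rw [show s₂ - v = -(v - s₂) by ring, Hc_neg, sub_self, Hc_zero]
  exact key_alg _ _ _ _ _ _ hk hn hE rfl

private lemma cell_alg (n k C A B H0v Hmv Hpv H0a Hma Hpa H0b Hmb Hpb iv i1 i2 : ℝ)
    (hn : n ≠ 0)
    (e1 : Hmv + Hpv = 2*H0v - 1 + n * iv)
    (e2 : Hma + Hpa = 2*H0a - 1 + n * i1)
    (e3 : Hmb + Hpb = 2*H0b - 1 + n * i2)
    (hab : k * B + k * A = 1) :
    2 * (C - (H0v - k*A*H0a - k*B*H0b)/n) - (C - (Hmv - k*A*Hma - k*B*Hmb)/n)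
      - (C - (Hpv - k*A*Hpa - k*B*Hpb)/n) + i1 * (k * A) + i2 * (k * B) = iv := by
  field_simp
  linear_combination e1 - (k*A)*e2 - (k*B)*e3 + hab

private lemma mul_Xm {n : ℕ} (hn : 4 ≤ n) [NeZero n]
    (L : Matrix (ZMod n) (ZMod n) ℝ)
    (hLdef : ∀ i j : ZMod n,
      L i j = if i = j then 2 else if i - j = 1 ∨ j - i = 1 then -1 else 0)
    (k : ℝ) (hk : 0 < k) (s₁ s₂ : ZMod n) (hs : s₁ ≠ s₂) :
    (L + k • Matrix.single s₁ s₁ (1:ℝ) + k • Matrix.single s₂ s₂ (1:ℝ))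
      * Xm n k s₁ s₂ = 1 := by
  haveI : Fact (1 < n) := ⟨by omega⟩
  have hnR : (0:ℝ) < n := by
    have : (0:ℕ) < n := by omega
    exact_mod_cast this
  have hnne : (n:ℝ) ≠ 0 := ne_of_gt hnR
  have hE : (n:ℝ) + k * Hc n (s₂ - s₁) ≠ 0 := by
    have := Hc_nonneg n (s₂ - s₁)
    positivity
  have h10 : (1 : ZMod n) ≠ 0 := by
    intro hh
    have := congrArg ZMod.val hh
    rw [ZMod.val_one n, ZMod.val_zero] at this; omega
  have h20 : (2 : ZMod n) ≠ 0 := by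
    intro hh
    have h2n : ((2:ℕ) : ZMod n) = (2 : ZMod n) := by push_cast; rfl
    have := congrArg ZMod.val (h2n.trans hh)
    rw [ZMod.val_cast_of_lt (by omega), ZMod.val_zero] at this; omega
  ext u v
  have hm1 : u - 1 ≠ u := fun h => h10 (by linear_combination -h)
  have hp1 : u + 1 ≠ u := fun h => h10 (by linear_combination h)
  have hmp : u - 1 ≠ u + 1 := fun h => h20 (by linear_combination -h)
  -- expand the product
  rw [Matrix.add_mul, Matrix.add_mul, Matrix.add_apply, Matrix.add_apply,
    Matrix.smul_mul, Matrix.smul_mul, Matrix.smul_apply, Matrix.smul_apply, Matrix.one_apply]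
  have hA1 : (Matrix.single s₁ s₁ (1:ℝ) * Xm n k s₁ s₂) u v
      = (if u = s₁ then (1:ℝ) else 0) * al n k s₁ s₂ v := by
    by_cases h : u = s₁
    · subst h
      rw [Matrix.single_mul_apply_same, one_mul, Xm_s₁, if_pos rfl, one_mul]
    · rw [Matrix.single_mul_apply_of_ne _ _ _ _ _ h, if_neg h, zero_mul]
  have hA2 : (Matrix.single s₂ s₂ (1:ℝ) * Xm n k s₁ s₂) u v
      = (if u = s₂ then (1:ℝ) else 0) * be n k s₁ s₂ v := by
    by_cases h : u = s₂
    · subst h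
      rw [Matrix.single_mul_apply_same, one_mul,
        Xm_s₂ n k (ne_of_gt hk) hnne s₁ u hE, if_pos rfl, one_mul]
    · rw [Matrix.single_mul_apply_of_ne _ _ _ _ _ h, if_neg h, zero_mul]
  have hL' : (L * Xm n k s₁ s₂) u v
      = 2 * Xm n k s₁ s₂ u v - Xm n k s₁ s₂ (u-1) v - Xm n k s₁ s₂ (u+1) v := by
    rw [Matrix.mul_apply]
    have hterm : ∀ w, L u w * Xm n k s₁ s₂ w v
        = (if w = u then 2 * Xm n k s₁ s₂ w v else 0)
          + ((if w = u - 1 then -Xm n k s₁ s₂ w v else 0)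
            + (if w = u + 1 then -Xm n k s₁ s₂ w v else 0)) := by
      intro w
      rw [hLdef]
      by_cases h1 : w = u
      · rw [if_pos h1.symm, if_pos h1,
          if_neg (fun hh : w = u - 1 => hm1 ((h1.symm.trans hh).symm)),
          if_neg (fun hh : w = u + 1 => hp1 ((h1.symm.trans hh).symm))]
        ring
      · rw [if_neg (fun hh => h1 hh.symm)]
        by_cases h2 : w = u - 1
        · rw [if_pos (Or.inl (by rw [h2]; ring) : u - w = 1 ∨ w - u = 1), if_neg h1, if_pos h2,
            if_neg (fun hh : w = u + 1 => hmp (h2.symm.trans hh))]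
          ring
        · by_cases h3 : w = u + 1
          · rw [if_pos (Or.inr (by rw [h3]; ring) : u - w = 1 ∨ w - u = 1), if_neg h1,
              if_neg h2, if_pos h3]
            ring
          · have hcond : ¬(u - w = 1 ∨ w - u = 1) := by
              rintro (hh | hh)
              · exact h2 (by linear_combination -hh)
              · exact h3 (by linear_combination hh)
            rw [if_neg hcond, if_neg h1, if_neg h2, if_neg h3]
            ring
    rw [Finset.sum_congr rfl (fun w _ => hterm w), Finset.sum_add_distrib,
      Finset.sum_ite_eq' Finset.univ u (fun w => 2 * Xm n k s₁ s₂ w v),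
      Finset.sum_add_distrib,
      Finset.sum_ite_eq' Finset.univ (u-1) (fun w => -Xm n k s₁ s₂ w v),
      Finset.sum_ite_eq' Finset.univ (u+1) (fun w => -Xm n k s₁ s₂ w v)]
    simp only [Finset.mem_univ, if_pos]
    ring
  rw [hA1, hA2, hL']
  -- second-difference identities
  have e1 : Hc n (u - 1 - v) + Hc n (u + 1 - v)
      = 2 * Hc n (u - v) - 1 + (n:ℝ) * (if u = v then (1:ℝ) else 0) := by
    have h := Hc_dd n hn (u - v)
    rw [show u - v - 1 = u - 1 - v by ring, show u - v + 1 = u + 1 - v by ring] at h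
    simp only [sub_eq_zero] at h
    exact h
  have e2 : Hc n (u - 1 - s₁) + Hc n (u + 1 - s₁)
      = 2 * Hc n (u - s₁) - 1 + (n:ℝ) * (if u = s₁ then (1:ℝ) else 0) := by
    have h := Hc_dd n hn (u - s₁)
    rw [show u - s₁ - 1 = u - 1 - s₁ by ring, show u - s₁ + 1 = u + 1 - s₁ by ring] at h
    simp only [sub_eq_zero] at h
    exact h
  have e3 : Hc n (u - 1 - s₂) + Hc n (u + 1 - s₂)
      = 2 * Hc n (u - s₂) - 1 + (n:ℝ) * (if u = s₂ then (1:ℝ) else 0) := by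
    have h := Hc_dd n hn (u - s₂)
    rw [show u - s₂ - 1 = u - 1 - s₂ by ring, show u - s₂ + 1 = u + 1 - s₂ by ring] at h
    simp only [sub_eq_zero] at h
    exact h
  have hab : k * be n k s₁ s₂ v + k * al n k s₁ s₂ v = 1 := by
    simp only [be]
    field_simp
    ring
  simp only [Xm, Matrix.of_apply, smul_eq_mul]
  have := cell_alg (n:ℝ) k
    (al n k s₁ s₂ v + (Hc n (v - s₁) - k * be n k s₁ s₂ v * Hc n (s₂ - s₁)) / n)
    (al n k s₁ s₂ v) (be n k s₁ s₂ v)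
    (Hc n (u - v)) (Hc n (u - 1 - v)) (Hc n (u + 1 - v))
    (Hc n (u - s₁)) (Hc n (u - 1 - s₁)) (Hc n (u + 1 - s₁))
    (Hc n (u - s₂)) (Hc n (u - 1 - s₂)) (Hc n (u + 1 - s₂))
    (if u = v then (1:ℝ) else 0) (if u = s₁ then (1:ℝ) else 0) (if u = s₂ then (1:ℝ) else 0)
    hnne e1 e2 e3 hab
  linear_combination this

private lemma zmod_shift (n : ℕ) [NeZero n] (F : ZMod n → ℝ) (c : ZMod n) :
    ∑ v : ZMod n, F (v - c) = ∑ v : ZMod n, F v :=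
  Fintype.sum_equiv (Equiv.subRight c) _ _ (fun _ => rfl)

private lemma diag_alg (P Q hδ k nn : ℝ) (hk : k ≠ 0) (hn : nn ≠ 0) (hE : nn + k*hδ ≠ 0) :
    (1/(2*k) + (Q-P)/(2*(nn+k*hδ)))
      + (P - k*(1/k - (1/(2*k) + (Q-P)/(2*(nn+k*hδ))))*hδ)/nn
      - (0 - k*(1/(2*k) + (Q-P)/(2*(nn+k*hδ)))*P
          - k*(1/k - (1/(2*k) + (Q-P)/(2*(nn+k*hδ))))*Q)/nn
    = (1/(2*k) - hδ/(2*nn)) + ((P+Q)/nn - k*(P-Q)^2/(2*nn*(nn+k*hδ))) := by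
  have hE2 : 2*(nn + k*hδ) ≠ 0 := mul_ne_zero two_ne_zero hE
  field_simp
  ring

private lemma diag_Xm (n : ℕ) [NeZero n] (k : ℝ) (hk : k ≠ 0) (hn : (n:ℝ) ≠ 0)
    (s₁ s₂ : ZMod n) (hE : (n:ℝ) + k * Hc n (s₂ - s₁) ≠ 0) (v : ZMod n) :
    Xm n k s₁ s₂ v v = (1/(2*k) - Hc n (s₂ - s₁)/(2*(n:ℝ)))
      + ((Hc n (v - s₁) + Hc n (v - s₂))/(n:ℝ)
        - k*(Hc n (v - s₁) - Hc n (v - s₂))^2/(2*(n:ℝ)*((n:ℝ) + k * Hc n (s₂ - s₁)))) := by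
  simp only [Xm, Matrix.of_apply, be, al, sub_self, Hc_zero]
  exact diag_alg _ _ _ _ _ hk hn hE

private lemma final_alg (nn k p : ℝ) (hn : 0 < nn) (hk : 0 < k) (hp : 0 ≤ p) :
    nn*(1/(2*k) - (p/2)/(2*nn)) + (2*(nn*(nn^2-1)/12)/nn
      - k*(nn*p*(p+2)/12)/(2*nn*(nn+k*(p/2))))
    = nn/(2*k) + (nn^2-1)/6 - p/4 - k*p*(p+2)/(12*(2*nn+k*p)) := by
  have h1 : nn + k*(p/2) ≠ 0 := by positivity
  have h2 : 2*nn + k*p ≠ 0 := by positivity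
  have hn' : nn ≠ 0 := ne_of_gt hn
  have hk' : k ≠ 0 := ne_of_gt hk
  field_simp
  ring

private lemma trace_Xm {n : ℕ} (hn : 4 ≤ n) [NeZero n]
    (k : ℝ) (hk : 0 < k) (s₁ s₂ : ZMod n) (hs : s₁ ≠ s₂) :
    (Xm n k s₁ s₂).trace
      = (n:ℝ)/(2*k) + ((n:ℝ)^2-1)/6
        - (((s₂-s₁).val:ℝ)*((n:ℝ)-((s₂-s₁).val:ℝ)))/4
        - k*(((s₂-s₁).val:ℝ)*((n:ℝ)-((s₂-s₁).val:ℝ)))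
            *((((s₂-s₁).val:ℝ)*((n:ℝ)-((s₂-s₁).val:ℝ)))+2)
          /(12*(2*(n:ℝ)+k*(((s₂-s₁).val:ℝ)*((n:ℝ)-((s₂-s₁).val:ℝ))))) := by
  have hδ0 : s₂ - s₁ ≠ 0 := sub_ne_zero_of_ne (Ne.symm hs)
  have hnR : (0:ℝ) < n := by
    have : (0:ℕ) < n := by omega
    exact_mod_cast this
  have hnne : (n:ℝ) ≠ 0 := ne_of_gt hnR
  have hkne : k ≠ 0 := ne_of_gt hk
  have hHnn := Hc_nonneg n (s₂ - s₁)
  have hE : (n:ℝ) + k * Hc n (s₂ - s₁) ≠ 0 := by positivity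
  have htr : (Xm n k s₁ s₂).trace = ∑ v : ZMod n, Xm n k s₁ s₂ v v := rfl
  rw [htr, Finset.sum_congr rfl (fun v _ => diag_Xm n k hkne hnne s₁ s₂ hE v),
    Finset.sum_add_distrib, Finset.sum_const, Finset.card_univ, ZMod.card, nsmul_eq_mul,
    Finset.sum_sub_distrib]
  have hPQ : ∑ v : ZMod n, (Hc n (v - s₁) + Hc n (v - s₂))/(n:ℝ)
      = 2*((n:ℝ)*((n:ℝ)^2-1)/12)/(n:ℝ) := by
    rw [← Finset.sum_div, Finset.sum_add_distrib, zmod_shift n (Hc n) s₁,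
      zmod_shift n (Hc n) s₂, sum_Hc]
    ring
  have hWsum : ∑ v : ZMod n, (Hc n (v - s₁) - Hc n (v - s₂))^2
      = (n:ℝ) * ((((s₂-s₁).val:ℝ))*((n:ℝ)-((s₂-s₁).val:ℝ)))
          * (((((s₂-s₁).val:ℝ))*((n:ℝ)-((s₂-s₁).val:ℝ)))+2)/12 := by
    have hre : ∑ v : ZMod n, (Hc n (v - s₁) - Hc n (v - s₂))^2
        = ∑ w : ZMod n, (Hc n w - Hc n (w - (s₂ - s₁)))^2 := by
      apply Fintype.sum_equiv (Equiv.subRight s₁)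
      intro v
      have : v - s₁ - (s₂ - s₁) = v - s₂ := by ring
      simp only [Equiv.subRight_apply, this]
    rw [hre, sum_W n (s₂ - s₁) hδ0]
  have hWdiv : ∑ v : ZMod n, k*(Hc n (v - s₁) - Hc n (v - s₂))^2
        /(2*(n:ℝ)*((n:ℝ) + k * Hc n (s₂ - s₁)))
      = k*((n:ℝ) * ((((s₂-s₁).val:ℝ))*((n:ℝ)-((s₂-s₁).val:ℝ)))
          * (((((s₂-s₁).val:ℝ))*((n:ℝ)-((s₂-s₁).val:ℝ)))+2)/12)
        /(2*(n:ℝ)*((n:ℝ) + k * Hc n (s₂ - s₁))) := by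
    rw [← Finset.sum_div, ← Finset.mul_sum, hWsum]
  rw [hPQ, hWdiv]
  have hHval : Hc n (s₂ - s₁) = (((s₂-s₁).val:ℝ))*((n:ℝ)-((s₂-s₁).val:ℝ))/2 := by
    simp only [Hc]
  have hp2 : 0 ≤ (((s₂-s₁).val:ℝ))*((n:ℝ)-((s₂-s₁).val:ℝ)) := by
    rw [hHval] at hHnn; linarith
  rw [hHval]
  exact final_alg (n:ℝ) k _ hnR hk hp2

private noncomputable def Tf (nn k p : ℝ) : ℝ :=
  nn/(2*k) + (nn^2-1)/6 - p/4 - k*p*(p+2)/(12*(2*nn+k*p))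

private lemma Tf_strict (nn k : ℝ) (hn : 0 < nn) (hk : 0 < k) {p q : ℝ}
    (hp : 0 ≤ p) (hpq : p < q) : Tf nn k q < Tf nn k p := by
  have hq : (0:ℝ) ≤ q := le_trans hp hpq.le
  have hdp : (0:ℝ) < 2*nn + k*p := by positivity
  have hdq : (0:ℝ) < 2*nn + k*q := by positivity
  have key : Tf nn k p - Tf nn k q
      = ((q-p) * (3*((2*nn+k*q)*(2*nn+k*p)) + k*(2*nn*(q+p+2)+k*(p*q))))
        / (12*((2*nn+k*q)*(2*nn+k*p))) := by
    simp only [Tf]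
    field_simp
    ring
  have hnum : 0 < (q-p) * (3*((2*nn+k*q)*(2*nn+k*p)) + k*(2*nn*(q+p+2)+k*(p*q))) := by
    have h1 : 0 < q - p := by linarith
    have h2 : 0 < 3*((2*nn+k*q)*(2*nn+k*p)) := by positivity
    have h3 : 0 ≤ k*(2*nn*(q+p+2)+k*(p*q)) := by
      have : 0 ≤ 2*nn*(q+p+2)+k*(p*q) := by nlinarith
      nlinarith
    nlinarith
  have hden : 0 < 12*((2*nn+k*q)*(2*nn+k*p)) := by positivity
  have := div_pos hnum hden
  linarith [key ▸ this]

/-- Optimal two noise-corrupted leaders on an even cycle. Let `n ≥ 4` be even,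
`L` the Laplacian of the cycle `C_n` (vertices `ZMod n`), `k > 0`, and for distinct vertices
`s₁ ≠ s₂` let `T s₁ s₂ = tr((L + k E_{s₁s₁} + k E_{s₂s₂})⁻¹)`. Then `T` is minimized exactly at
antipodal pairs: if `t₁ ≠ t₂` have geodesic distance `n/2`, then `T t₁ t₂ ≤ T s₁ s₂` for all
distinct `s₁, s₂`, with equality iff `dist(s₁,s₂) = n/2`. -/
theorem stmt_12 {n : ℕ} (hn : 4 ≤ n) (hne : Even n) [NeZero n]
    (L : Matrix (ZMod n) (ZMod n) ℝ)
    (hLdef : ∀ i j : ZMod n,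
      L i j = if i = j then 2 else if i - j = 1 ∨ j - i = 1 then -1 else 0)
    (k : ℝ) (hk : 0 < k)
    (T : ZMod n → ZMod n → ℝ)
    (hT : ∀ s₁ s₂ : ZMod n, T s₁ s₂ =
      ((L + k • Matrix.single s₁ s₁ (1 : ℝ)
        + k • Matrix.single s₂ s₂ (1 : ℝ))⁻¹).trace)
    (s₁ s₂ t₁ t₂ : ZMod n) (hs : s₁ ≠ s₂) (ht : t₁ ≠ t₂)
    (htdist : min (t₁ - t₂).val (t₂ - t₁).val = n / 2) :
    T t₁ t₂ ≤ T s₁ s₂ ∧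
    (T s₁ s₂ = T t₁ t₂ ↔ min (s₁ - s₂).val (s₂ - s₁).val = n / 2) := by
  obtain ⟨m, hm⟩ := hne
  have hnR : (0:ℝ) < n := by
    have : (0:ℕ) < n := by omega
    exact_mod_cast this
  have hnm : (n:ℝ) = (m:ℝ) + (m:ℝ) := by exact_mod_cast hm
  have hδs : s₂ - s₁ ≠ 0 := sub_ne_zero_of_ne (Ne.symm hs)
  have hδt : t₂ - t₁ ≠ 0 := sub_ne_zero_of_ne (Ne.symm ht)
  have ha1 : 0 < (s₂ - s₁).val :=
    Nat.pos_of_ne_zero (fun hh => hδs ((ZMod.val_eq_zero _).1 hh))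
  have han : (s₂ - s₁).val < n := ZMod.val_lt _
  have hc1 : 0 < (t₂ - t₁).val :=
    Nat.pos_of_ne_zero (fun hh => hδt ((ZMod.val_eq_zero _).1 hh))
  have hcn : (t₂ - t₁).val < n := ZMod.val_lt _
  have hbs : (s₁ - s₂).val = n - (s₂ - s₁).val := by
    rw [show s₁ - s₂ = -(s₂ - s₁) by ring, ZMod.neg_val, if_neg hδs]
  have hbt : (t₁ - t₂).val = n - (t₂ - t₁).val := by
    rw [show t₁ - t₂ = -(t₂ - t₁) by ring, ZMod.neg_val, if_neg hδt]
  have hcm : (t₂ - t₁).val = m := by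
    rw [hbt] at htdist
    omega
  have hTs : T s₁ s₂ = Tf (n:ℝ) k (((s₂ - s₁).val:ℝ)*((n:ℝ)-((s₂ - s₁).val:ℝ))) := by
    rw [hT, Matrix.inv_eq_right_inv (mul_Xm hn L hLdef k hk s₁ s₂ hs),
      trace_Xm hn k hk s₁ s₂ hs]
    rfl
  have hTt : T t₁ t₂ = Tf (n:ℝ) k ((m:ℝ)*((n:ℝ)-(m:ℝ))) := by
    rw [hT, Matrix.inv_eq_right_inv (mul_Xm hn L hLdef k hk t₁ t₂ ht),
      trace_Xm hn k hk t₁ t₂ ht, hcm]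
    rfl
  set aR : ℝ := ((s₂ - s₁).val : ℝ) with haR
  have haRn : aR ≤ (n:ℝ) := by
    rw [haR]; exact_mod_cast han.le
  have haR0 : 0 ≤ aR := by rw [haR]; positivity
  have hps0 : 0 ≤ aR * ((n:ℝ) - aR) := mul_nonneg haR0 (by linarith)
  have hle : aR * ((n:ℝ) - aR) ≤ (m:ℝ)*((n:ℝ)-(m:ℝ)) := by nlinarith [sq_nonneg (aR - m)]
  have hiff : aR * ((n:ℝ) - aR) = (m:ℝ)*((n:ℝ)-(m:ℝ)) ↔ (s₂ - s₁).val = m := by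
    constructor
    · intro h
      have h2 : (aR - m)^2 = 0 := by nlinarith
      have h3 : aR = (m:ℝ) := by
        have := pow_eq_zero_iff (n := 2) (by norm_num) |>.1 h2
        linarith
      rw [haR] at h3
      exact_mod_cast h3
    · intro h
      rw [haR, h]
  have hminiff : (s₂ - s₁).val = m ↔ min (s₁ - s₂).val (s₂ - s₁).val = n / 2 := by
    rw [hbs]
    omega
  constructor
  · rw [hTs, hTt]
    rcases eq_or_lt_of_le hle with h | h
    · rw [h]
    · exact (Tf_strict (n:ℝ) k hnR hk hps0 h).le
  · rw [hTs, hTt]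
    constructor
    · intro hEq
      have hpspt : aR * ((n:ℝ) - aR) = (m:ℝ)*((n:ℝ)-(m:ℝ)) := by
        rcases eq_or_lt_of_le hle with h | h
        · exact h
        · have hlt := Tf_strict (n:ℝ) k hnR hk hps0 h
          exact absurd hEq (ne_of_gt hlt)
      exact hminiff.1 (hiff.1 hpspt)
    · intro hmin
      rw [hiff.2 (hminiff.2 hmin)]
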